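/- Let δ, γ ∈ (−1, +∞) and let h : [0,∞) → ℝ be continuous with 0 ≤ h(x) ≤ 1 for all x ≥ 0. Then for every x ≥ 0, 0 ≤ F(x; h) ≤ M₁(δ,γ), where M₁(δ,γ) := √π·max(1,1+δ)^{1/2} / (2·min(1,1+δ)·min(1,1+γ)^{1/2}). -/

import Mathlib

open Real Filter Set

/-- `F(x; h)` from the paper. -/
noncomputable def Fint (δ γ : ℝ) (h : ℝ → ℝ) (x : ℝ) : ℝ :=
  ∫ w in (0:ℝ)..x,
    Real.exp (-(∫ z in (0:ℝ)..w, 2*z*(1+γ*h z)/(1+δ*h z))) * (1/(1+δ*h w))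

/-- The constant `M₁(δ,γ)` from the paper. -/
noncomputable def M1 (δ γ : ℝ) : ℝ :=
  Real.sqrt π * (max 1 (1+δ)) ^ ((1:ℝ)/2) /
    (2 * (min 1 (1+δ)) * (min 1 (1+γ)) ^ ((1:ℝ)/2))

lemma aux_bounds (a t : ℝ) (ha : -1 < a) (h0 : 0 ≤ t) (h1 : t ≤ 1) :
    min 1 (1+a) ≤ 1 + a*t ∧ 1 + a*t ≤ max 1 (1+a) := by
  constructor <;> rcases le_or_gt 0 a with hc | hc
  · have := min_le_left (1:ℝ) (1+a); nlinarith [mul_nonneg hc h0]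
  · have := min_le_right (1:ℝ) (1+a)
    nlinarith [mul_nonneg (sub_nonneg.2 h1) (neg_pos.2 hc).le]
  · have := le_max_right (1:ℝ) (1+a)
    nlinarith [mul_nonneg (sub_nonneg.2 h1) hc]
  · have := le_max_left (1:ℝ) (1+a); nlinarith [mul_nonneg h0 (neg_pos.2 hc).le]

theorem F_bounds (δ γ : ℝ) (hδ : -1 < δ) (hγ : -1 < γ)
    (h : ℝ → ℝ) (hcont : ContinuousOn h (Set.Ici 0))
    (hb : ∀ x ≥ (0:ℝ), 0 ≤ h x ∧ h x ≤ 1) :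
    ∀ x ≥ (0:ℝ), 0 ≤ Fint δ γ h x ∧ Fint δ γ h x ≤ M1 δ γ := by
  set m := min 1 (1+δ) with hm_def
  set Mx := max 1 (1+δ) with hM_def
  set mg := min 1 (1+γ) with hmg_def
  have hm : 0 < m := lt_min one_pos (by linarith)
  have hM : 0 < Mx := lt_of_lt_of_le one_pos (le_max_left _ _)
  have hmg : 0 < mg := lt_min one_pos (by linarith)
  set b : ℝ := mg / Mx with hb_def
  have hbpos : 0 < b := div_pos hmg hM
  -- pointwise denominator bounds
  have hden : ∀ z ∈ Ici (0:ℝ), m ≤ 1 + δ * h z ∧ 1 + δ * h z ≤ Mx := fun z hz =>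
    aux_bounds δ (h z) hδ (hb z hz).1 (hb z hz).2
  have hdenpos : ∀ z ∈ Ici (0:ℝ), 0 < 1 + δ * h z := fun z hz =>
    lt_of_lt_of_le hm (hden z hz).1
  have hnum : ∀ z ∈ Ici (0:ℝ), mg ≤ 1 + γ * h z := fun z hz =>
    (aux_bounds γ (h z) hγ (hb z hz).1 (hb z hz).2).1
  -- continuity of the inner integrand
  set f : ℝ → ℝ := fun z => 2*z*(1+γ*h z)/(1+δ*h z) with hf_def
  have hdc : ContinuousOn (fun z => 1 + δ * h z) (Ici 0) :=
    continuousOn_const.add (continuousOn_const.mul hcont)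
  have hfc : ContinuousOn f (Ici 0) := by
    apply ContinuousOn.div
    · exact ((continuous_const.mul continuous_id).continuousOn).mul
        (continuousOn_const.add (continuousOn_const.mul hcont))
    · exact hdc
    · exact fun z hz => (hdenpos z hz).ne'
  -- inner integral lower bound
  have hP : ∀ w : ℝ, 0 ≤ w → b * w ^ 2 ≤ ∫ z in (0:ℝ)..w, f z := by
    intro w hw
    have hint : IntervalIntegrable f MeasureTheory.volume 0 w := by
      apply ContinuousOn.intervalIntegrable
      rw [uIcc_of_le hw]
      exact hfc.mono (Icc_subset_Ici_self)
    have hint2 : IntervalIntegrable (fun z => 2 * b * z) MeasureTheory.volume 0 w :=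
      (continuous_const.mul continuous_id).intervalIntegrable _ _
    have hmono : (∫ z in (0:ℝ)..w, 2 * b * z) ≤ ∫ z in (0:ℝ)..w, f z := by
      apply intervalIntegral.integral_mono_on hw hint2 hint
      intro z hz
      have hz0 : (0:ℝ) ≤ z := hz.1
      have hzi : z ∈ Ici (0:ℝ) := hz0
      have hdiv : b ≤ (1 + γ * h z) / (1 + δ * h z) :=
        div_le_div₀ (by linarith [hnum z hzi]) (hnum z hzi) (hdenpos z hzi) (hden z hzi).2
      calc 2 * b * z = 2 * z * b := by ring
        _ ≤ 2 * z * ((1 + γ * h z) / (1 + δ * h z)) :=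
            mul_le_mul_of_nonneg_left hdiv (by linarith)
        _ = f z := (mul_div_assoc _ _ _).symm
    have : (∫ z in (0:ℝ)..w, 2 * b * z) = b * w ^ 2 := by
      rw [intervalIntegral.integral_const_mul, integral_id]
      ring
    linarith
  intro x hx
  -- the outer integrand
  set g : ℝ → ℝ := fun w =>
    Real.exp (-(∫ z in (0:ℝ)..w, f z)) * (1/(1+δ*h w)) with hg_def
  have hgc : ContinuousOn g (Icc 0 x) := by
    have hPint : MeasureTheory.IntegrableOn f (uIcc 0 x) MeasureTheory.volume := by
      rw [uIcc_of_le hx]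
      exact (hfc.mono Icc_subset_Ici_self).integrableOn_Icc
    have hPc : ContinuousOn (fun w => ∫ z in (0:ℝ)..w, f z) (Icc 0 x) := by
      have := intervalIntegral.continuousOn_primitive_interval hPint
      rwa [uIcc_of_le hx] at this
    exact (Real.continuous_exp.comp_continuousOn hPc.neg).mul
      ((continuousOn_const.div (hdc.mono Icc_subset_Ici_self)
        (fun z hz => (hdenpos z (Icc_subset_Ici_self hz)).ne')))
  have hgint : IntervalIntegrable g MeasureTheory.volume 0 x := by
    apply ContinuousOn.intervalIntegrable
    rwa [uIcc_of_le hx]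
  have hFeq : Fint δ γ h x = ∫ w in (0:ℝ)..x, g w := rfl
  constructor
  · rw [hFeq]
    apply intervalIntegral.integral_nonneg hx
    intro u hu
    have := hdenpos u (Icc_subset_Ici_self hu)
    positivity
  · -- upper bound
    have hBint : IntervalIntegrable (fun w => Real.exp (-(b * w ^ 2)) * (1/m))
        MeasureTheory.volume 0 x :=
      (((continuous_const.mul (continuous_pow 2)).neg.rexp).mul continuous_const).intervalIntegrable _ _
    have step1 : Fint δ γ h x ≤ ∫ w in (0:ℝ)..x, Real.exp (-(b * w ^ 2)) * (1/m) := by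
      rw [hFeq]
      apply intervalIntegral.integral_mono_on hx hgint hBint
      intro w hw
      have hwi : w ∈ Ici (0:ℝ) := hw.1
      have h1 : Real.exp (-(∫ z in (0:ℝ)..w, f z)) ≤ Real.exp (-(b * w ^ 2)) :=
        Real.exp_le_exp.2 (neg_le_neg (hP w hw.1))
      have h2 : 1/(1+δ*h w) ≤ 1/m :=
        one_div_le_one_div_of_le hm (hden w hwi).1
      have h3 : (0:ℝ) ≤ 1/(1+δ*h w) := by
        have := hdenpos w hwi; positivity
      exact mul_le_mul h1 h2 h3 (Real.exp_pos _).le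
    have step2 : (∫ w in (0:ℝ)..x, Real.exp (-(b * w ^ 2)) * (1/m))
        ≤ Real.sqrt (π / b) / 2 * (1/m) := by
      rw [intervalIntegral.integral_mul_const]
      apply mul_le_mul_of_nonneg_right _ (by positivity)
      have heq : (∫ w in (0:ℝ)..x, Real.exp (-(b * w ^ 2)))
          = ∫ w in Ioc (0:ℝ) x, Real.exp (-b * w ^ 2) := by
        rw [intervalIntegral.integral_of_le hx]
        simp [neg_mul]
      rw [heq, ← integral_gaussian_Ioi b]
      apply MeasureTheory.setIntegral_mono_set
        (integrable_exp_neg_mul_sq hbpos).integrableOn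
      · exact Filter.Eventually.of_forall fun w => (Real.exp_pos _).le
      · exact HasSubset.Subset.eventuallyLE Ioc_subset_Ioi_self
    have final : Real.sqrt (π / b) / 2 * (1/m) = M1 δ γ := by
      have h1 : π / b = π * Mx / mg := by
        rw [hb_def]; field_simp
      rw [h1, M1, ← hm_def, ← hM_def, ← hmg_def, ← Real.sqrt_eq_rpow, ← Real.sqrt_eq_rpow,
        Real.sqrt_div (by positivity) mg, Real.sqrt_mul (by positivity) Mx]
      have hs : 0 < Real.sqrt mg := Real.sqrt_pos.2 hmg
      field_simp
    linarith
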